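/- For a linear model f(X) = Σ_j a_j X_j, the dependent SHAP part of feature i at sample x equals φ_{i,dep} = (1/M!) Σ_R Σ_{j ∈ \bar{S^R}\setminus{i}} a_j (E[X_j | X_{S^R} = x_{S^R}, X_i = x_i] − E[X_j | X_{S^R} = x_{S^R}]). -/

import Mathlib

/-- `upd x S z` is the vector `[x_S, z_{S̄}]`. -/
noncomputable def upd {M : ℕ} (x : Fin M → ℝ) (S : Finset (Fin M)) (z : Fin M → ℝ) :
    Fin M → ℝ := fun j => if j ∈ S then x j else z j

/-- The coalition `S^R` of features preceding feature `i` in the permutation `R`. -/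
def SR {M : ℕ} (i : Fin M) (R : Equiv.Perm (Fin M)) : Finset (Fin M) :=
  Finset.univ.filter fun j => R.symm j < R.symm i

section aux
variable {M : ℕ} {CE : Finset (Fin M) → ((Fin M → ℝ) → ℝ) → ℝ}
  (hlin : ∀ (S : Finset (Fin M)) (c : ℝ) (g h : (Fin M → ℝ) → ℝ),
      CE S (fun z => c * g z + h z) = c * CE S g + CE S h)
  (hconst : ∀ (S : Finset (Fin M)) (c : ℝ), CE S (fun _ => c) = c)
include hlin hconst

lemma CE_sum (S : Finset (Fin M)) (F : Finset (Fin M)) (f : Fin M → (Fin M → ℝ) → ℝ) :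
    CE S (fun z => ∑ j ∈ F, f j z) = ∑ j ∈ F, CE S (f j) := by
  classical
  induction F using Finset.induction with
  | empty => simpa using hconst S 0
  | insert b F' hnot ih =>
    have h := hlin S 1 (f b) (fun z => ∑ j ∈ F', f j z)
    simp only [one_mul] at h
    rw [Finset.sum_insert hnot]
    have : (fun z => f b z + ∑ j ∈ F', f j z) = fun z => ∑ j ∈ insert b F', f j z := by
      funext z; rw [Finset.sum_insert hnot]
    rw [← this, h, ih]

lemma CE_smul (S : Finset (Fin M)) (c : ℝ) (g : (Fin M → ℝ) → ℝ) :
    CE S (fun z => c * g z) = c * CE S g := by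
  have h := hlin S c g (fun _ => 0)
  have h0 : CE S (fun _ => (0:ℝ)) = 0 := hconst S 0
  simp only [add_zero, h0] at h
  exact h

lemma CE_decomp (S T : Finset (Fin M)) (a x : Fin M → ℝ) :
    CE S (fun z => ∑ j, a j * upd x T z j)
      = (∑ j ∈ T, a j * x j) + ∑ j ∈ Tᶜ, a j * CE S (fun z => z j) := by
  classical
  rw [CE_sum hlin hconst S Finset.univ (fun j z => a j * upd x T z j)]
  rw [← Finset.sum_add_sum_compl T]
  congr 1
  · apply Finset.sum_congr rfl
    intro j hj
    have : (fun z : Fin M → ℝ => a j * upd x T z j) = fun _ => a j * x j := by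
      funext z; simp [upd, hj]
    rw [this, hconst]
  · apply Finset.sum_congr rfl
    intro j hj
    have hj' : j ∉ T := Finset.mem_compl.mp hj
    have : (fun z : Fin M → ℝ => a j * upd x T z j) = fun z => a j * z j := by
      funext z; simp [upd, hj']
    rw [this, CE_smul hlin hconst]

end aux

/-- For the linear model `f(X) = Σ_j a_j X_j`, the dependent SHAP part of feature `i` at
sample `x` equals
`(1/M!) Σ_R Σ_{j ∈ S̄^R∖{i}} a_j (E[X_j | X_{S^R}=x_{S^R}, X_i=x_i] − E[X_j | X_{S^R}=x_{S^R}])`.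
`CE S g` denotes `E[g(X) | X_S = x_S]`, which is linear and maps constants to themselves. -/
theorem linear_dependent_part {M : ℕ} (i : Fin M) (a : Fin M → ℝ) (x : Fin M → ℝ)
    (CE : Finset (Fin M) → ((Fin M → ℝ) → ℝ) → ℝ)
    (hlin : ∀ (S : Finset (Fin M)) (c : ℝ) (g h : (Fin M → ℝ) → ℝ),
      CE S (fun z => c * g z + h z) = c * CE S g + CE S h)
    (hconst : ∀ (S : Finset (Fin M)) (c : ℝ), CE S (fun _ => c) = c) :
    (1 / (M.factorial : ℝ)) * ∑ R : Equiv.Perm (Fin M),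
        (CE (insert i (SR i R)) (fun z => ∑ j, a j * upd x (insert i (SR i R)) z j)
          - CE (SR i R) (fun z => ∑ j, a j * upd x (insert i (SR i R)) z j))
      = (1 / (M.factorial : ℝ)) * ∑ R : Equiv.Perm (Fin M),
          ∑ j ∈ (insert i (SR i R))ᶜ,
            a j * (CE (insert i (SR i R)) (fun z => z j)
                    - CE (SR i R) (fun z => z j)) := by
  congr 1
  apply Finset.sum_congr rfl
  intro R _
  rw [CE_decomp hlin hconst (insert i (SR i R)) (insert i (SR i R)) a x,
      CE_decomp hlin hconst (SR i R) (insert i (SR i R)) a x]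
  rw [add_sub_add_left_eq_sub, ← Finset.sum_sub_distrib]
  exact Finset.sum_congr rfl fun j _ => (mul_sub _ _ _).symm
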